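/- Let Z ∈ ℝ^{n×m} admit a decomposition Z = L Σ Rᵀ, where L ∈ ℝ^{n×k} and R ∈ ℝ^{m×k} satisfy LᵀL = I_k and RᵀR = I_k, and Σ ∈ ℝ^{k×k} is diagonal with nonnegative diagonal entries. Set U = L Σ^{1/2} and V = R Σ^{1/2}, where Σ^{1/2} is the entrywise square root of Σ. Then Z = U Vᵀ and (1/2)(‖U‖_F² + ‖V‖_F²) = Tr(Σ) = ‖Z‖_*. Consequently, the minimum of (1/2)(‖U‖_F² + ‖V‖_F²) over all factorizations Z = U Vᵀ with U ∈ ℝ^{n×k}, V ∈ ℝ^{m×k} equals ‖Z‖_* and is attained. -/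

import Mathlib

open Matrix

/-- The nuclear norm of a real matrix: the trace of the positive-semidefinite
square root of `Xᵀ * X` (i.e. the sum of the singular values of `X`). -/
noncomputable def nuclearNorm {n m : ℕ} (X : Matrix (Fin n) (Fin m) ℝ) : ℝ :=
  ((Matrix.posSemidef_conjTranspose_mul_self X).1.eigenvectorUnitary.1 *
    Matrix.diagonal (fun i => Real.sqrt ((Matrix.posSemidef_conjTranspose_mul_self X).1.eigenvalues i)) *
    (star (Matrix.posSemidef_conjTranspose_mul_self X).1.eigenvectorUnitary : Matrix (Fin m) (Fin m) ℝ)).trace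

open scoped MatrixOrder in
lemma nuclearNorm_eq_trace_sqrt {n m : ℕ} (X : Matrix (Fin n) (Fin m) ℝ) :
    nuclearNorm X = (CFC.sqrt (Xᴴ * X)).trace := by
  have hH := Matrix.posSemidef_conjTranspose_mul_self X
  rw [CFC.sqrt_eq_cfc, cfc_nnreal_eq_real _ (Xᴴ * X), hH.1.cfc_eq, nuclearNorm]
  simp only [IsHermitian.cfc, Unitary.conjStarAlgAut_apply, Real.coe_sqrt, Real.coe_toNNReal']
  rw [show ((fun x => Real.sqrt (max x 0)) ∘ hH.1.eigenvalues) = fun i => Real.sqrt (hH.1.eigenvalues i) from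
    funext fun i => by simp only [Function.comp_apply, max_eq_left (hH.eigenvalues_nonneg i)]]
  rfl

lemma trace_nonneg_of_posSemidef {k : ℕ} {A : Matrix (Fin k) (Fin k) ℝ}
    (hA : A.PosSemidef) : 0 ≤ A.trace := by
  have h : ∀ i, 0 ≤ A i i := by
    intro i
    exact hA.diag_nonneg
  exact Finset.sum_nonneg fun i _ => h i

open scoped MatrixOrder in
lemma trace_mul_nonneg_of_posSemidef {k : ℕ} {A B : Matrix (Fin k) (Fin k) ℝ}
    (hA : A.PosSemidef) (hB : B.PosSemidef) : 0 ≤ (A * B).trace := by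
  have h1 : A * B = CFC.sqrt A * (CFC.sqrt A * B) := by
    rw [← Matrix.mul_assoc, CFC.sqrt_mul_sqrt_self A hA.nonneg]
  have h2 : CFC.sqrt A * B * CFC.sqrt A = (CFC.sqrt A)ᴴ * B * CFC.sqrt A := by
    rw [(CFC.sqrt_nonneg A).posSemidef.1]
  rw [h1, Matrix.trace_mul_comm, h2]
  exact trace_nonneg_of_posSemidef (hB.conjTranspose_mul_mul_same _)

lemma frob_trace_ineq {n k : ℕ} (A B : Matrix (Fin n) (Fin k) ℝ) :
    (Aᵀ * B).trace ≤ (1 / 2) * ((Aᵀ * A).trace + (Bᵀ * B).trace) := by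
  simp only [Matrix.trace, Matrix.diag, Matrix.mul_apply, Matrix.transpose_apply]
  calc ∑ i, ∑ j, A j i * B j i
      ≤ ∑ i, ∑ j, (1 / 2) * (A j i * A j i + B j i * B j i) :=
        Finset.sum_le_sum fun i _ => Finset.sum_le_sum fun j _ => by
          nlinarith [sq_nonneg (A j i - B j i)]
    _ = (1 / 2) * ((∑ i, ∑ j, A j i * A j i) + ∑ i, ∑ j, B j i * B j i) := by
        simp only [← Finset.mul_sum, Finset.sum_add_distrib]

open scoped MatrixOrder in
/-- Given `Z = L Σ Rᵀ` with orthonormal columns `L, R` and diagonal nonnegative `Σ`,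
setting `U = L Σ^{1/2}`, `V = R Σ^{1/2}` gives `Z = U Vᵀ`,
`(1/2)(‖U‖_F² + ‖V‖_F²) = Tr(Σ) = ‖Z‖₊`, and the minimum of `(1/2)(‖U‖_F² + ‖V‖_F²)`
over all factorizations `Z = U Vᵀ` equals `‖Z‖₊` and is attained. -/
theorem nuclearNorm_factorization_attained {n m k : ℕ}
    (Z : Matrix (Fin n) (Fin m) ℝ)
    (L : Matrix (Fin n) (Fin k) ℝ) (R : Matrix (Fin m) (Fin k) ℝ)
    (σ : Fin k → ℝ) (hσ : ∀ i, 0 ≤ σ i)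
    (hZ : Z = L * Matrix.diagonal σ * Rᵀ)
    (hL : Lᵀ * L = 1) (hR : Rᵀ * R = 1) :
    let U := L * Matrix.diagonal (fun i => Real.sqrt (σ i))
    let V := R * Matrix.diagonal (fun i => Real.sqrt (σ i))
    Z = U * Vᵀ ∧
    (1 / 2) * ((Uᵀ * U).trace + (Vᵀ * V).trace) = (Matrix.diagonal σ).trace ∧
    (Matrix.diagonal σ).trace = nuclearNorm Z ∧
    IsLeast {c : ℝ | ∃ (U' : Matrix (Fin n) (Fin k) ℝ) (V' : Matrix (Fin m) (Fin k) ℝ),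
        Z = U' * V'ᵀ ∧ c = (1 / 2) * ((U'ᵀ * U').trace + (V'ᵀ * V').trace)}
      (nuclearNorm Z) := by
  intro U V
  set D := Matrix.diagonal σ with hD
  set S := Matrix.diagonal (fun i => Real.sqrt (σ i)) with hS
  have hSS : S * S = D := by
    rw [hS, hD, Matrix.diagonal_mul_diagonal,
      show (fun i => Real.sqrt (σ i) * Real.sqrt (σ i)) = σ from
        funext fun i => Real.mul_self_sqrt (hσ i)]
  have hST : Sᵀ = S := Matrix.diagonal_transpose _
  have hDT : Dᵀ = D := Matrix.diagonal_transpose _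
  have hSSX : ∀ {p : ℕ} (X : Matrix (Fin k) (Fin p) ℝ), S * (S * X) = D * X := fun X => by
    rw [← Matrix.mul_assoc, hSS]
  have hLc : ∀ {p : ℕ} (X : Matrix (Fin k) (Fin p) ℝ), Lᵀ * (L * X) = X := fun X => by
    rw [← Matrix.mul_assoc, hL, Matrix.one_mul]
  have hRc : ∀ {p : ℕ} (X : Matrix (Fin k) (Fin p) ℝ), Rᵀ * (R * X) = X := fun X => by
    rw [← Matrix.mul_assoc, hR, Matrix.one_mul]
  -- Part 1
  have h1 : Z = U * Vᵀ := by
    show Z = (L * S) * (R * S)ᵀ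
    rw [Matrix.transpose_mul, hST, hZ]
    simp only [Matrix.mul_assoc, hSSX]
  -- Part 2
  have hUU : Uᵀ * U = D := by
    show (L * S)ᵀ * (L * S) = D
    rw [Matrix.transpose_mul, hST]
    simp only [Matrix.mul_assoc, hLc]
    exact hSS
  have hVV : Vᵀ * V = D := by
    show (R * S)ᵀ * (R * S) = D
    rw [Matrix.transpose_mul, hST]
    simp only [Matrix.mul_assoc, hRc]
    exact hSS
  have h2 : (1 / 2) * ((Uᵀ * U).trace + (Vᵀ * V).trace) = D.trace := by
    rw [hUU, hVV]; ring
  -- Part 3 : identify the sqrt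
  have hM : (R * D * Rᵀ).PosSemidef := by
    have e : R * D * Rᵀ = (S * Rᵀ)ᴴ * (S * Rᵀ) := by
      rw [Matrix.conjTranspose_eq_transpose_of_trivial, Matrix.transpose_mul, hST,
        Matrix.transpose_transpose]
      simp only [Matrix.mul_assoc, hSSX]
    rw [e]
    exact Matrix.posSemidef_conjTranspose_mul_self _
  have hsq : (R * D * Rᵀ) ^ 2 = Zᴴ * Z := by
    rw [Matrix.conjTranspose_eq_transpose_of_trivial, hZ, pow_two]
    simp only [Matrix.transpose_mul, Matrix.transpose_transpose, hDT, Matrix.mul_assoc, hRc, hLc]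
  have hsqrt : R * D * Rᵀ = CFC.sqrt (Zᴴ * Z) :=
    (CFC.sqrt_unique (by rw [← hsq, pow_two]) hM.nonneg).symm
  have h3 : D.trace = nuclearNorm Z := by
    rw [nuclearNorm_eq_trace_sqrt, ← hsqrt, Matrix.trace_mul_comm, hRc]
  refine ⟨h1, h2, h3, ?_, ?_⟩
  · exact ⟨U, V, h1, by rw [← h3, ← h2]⟩
  · rintro c ⟨U', V', hfac, rfl⟩
    rw [← h3]
    have key : ∀ {p : ℕ} (W : Matrix (Fin p) (Fin k) ℝ) (P : Matrix (Fin p) (Fin k) ℝ),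
        Pᵀ * P = 1 → ((Wᵀ * P)ᵀ * (Wᵀ * P)).trace ≤ (Wᵀ * W).trace := by
      intro p W P hP
      have hsym : (P * Pᵀ)ᵀ = P * Pᵀ := by
        rw [Matrix.transpose_mul, Matrix.transpose_transpose]
      have hPP : P * Pᵀ * (P * Pᵀ) = P * Pᵀ := by
        rw [Matrix.mul_assoc, ← Matrix.mul_assoc Pᵀ, hP, Matrix.one_mul]
      have hidem : ((1 : Matrix (Fin p) (Fin p) ℝ) - P * Pᵀ) *
          ((1 : Matrix (Fin p) (Fin p) ℝ) - P * Pᵀ) = 1 - P * Pᵀ := by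
        rw [Matrix.mul_sub, Matrix.sub_mul, Matrix.sub_mul, hPP]
        simp only [Matrix.one_mul, Matrix.mul_one]
        abel
      have hproj : ((1 : Matrix (Fin p) (Fin p) ℝ) - P * Pᵀ).PosSemidef := by
        have e : (1 : Matrix (Fin p) (Fin p) ℝ) - P * Pᵀ =
            ((1 : Matrix (Fin p) (Fin p) ℝ) - P * Pᵀ)ᴴ *
            ((1 : Matrix (Fin p) (Fin p) ℝ) - P * Pᵀ) := by
          rw [Matrix.conjTranspose_eq_transpose_of_trivial, Matrix.transpose_sub,
            Matrix.transpose_one, hsym, hidem]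
        rw [e]
        exact Matrix.posSemidef_conjTranspose_mul_self _
      have hWW : (W * Wᵀ).PosSemidef := Matrix.posSemidef_self_mul_conjTranspose W
      have h0 : 0 ≤ ((W * Wᵀ) * (1 - P * Pᵀ)).trace :=
        trace_mul_nonneg_of_posSemidef hWW hproj
      rw [Matrix.mul_sub, Matrix.mul_one, Matrix.trace_sub, sub_nonneg] at h0
      calc ((Wᵀ * P)ᵀ * (Wᵀ * P)).trace
          = ((W * Wᵀ) * (P * Pᵀ)).trace := by
            rw [Matrix.transpose_mul, Matrix.transpose_transpose, Matrix.mul_assoc,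
              Matrix.trace_mul_comm]
            congr 1
            simp only [Matrix.mul_assoc]
        _ ≤ ((W * Wᵀ)).trace := h0
        _ = (Wᵀ * W).trace := Matrix.trace_mul_comm W Wᵀ
    have hA2 := key U' L hL
    have hB2 := key V' R hR
    have hstep := frob_trace_ineq (U'ᵀ * L) (V'ᵀ * R)
    have htrD : D.trace = ((U'ᵀ * L)ᵀ * (V'ᵀ * R)).trace := by
      symm
      have e : (U'ᵀ * L)ᵀ * (V'ᵀ * R) = Lᵀ * (Z * R) := by
        rw [hfac, Matrix.transpose_mul, Matrix.transpose_transpose]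
        simp only [Matrix.mul_assoc]
      rw [e, hZ]
      simp only [Matrix.mul_assoc, hLc]
      rw [hR, Matrix.mul_one]
    linarith
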